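/- Let (a_k) be a sequence of p-adic integers (elements of the ring of integers of an algebraic closure of Q_p, or of Z_p) of the form a_k = Σ_{i=1}^m n_i α_i^k for distinct nonzero α_i and nonzero integers n_i. If there exist a real constant c ≥ 0 and q = p^f such that v_q(a_k) ≥ k − c for all k ≥ c (where v_q is the q-adic valuation), then v_q(α_i) ≥ 1 for every i, and consequently v_q(a_k) ≥ k for all k ≥ 1. -/

import Mathlib

private lemma val_sum_ge {K : Type*} [Field K] (v : K → WithTop ℝ)
    (hv0 : ∀ x : K, v x = ⊤ ↔ x = 0)
    (hvadd : ∀ x y : K, min (v x) (v y) ≤ v (x + y))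
    {ι : Type*} (s : Finset ι) (f : ι → K) (B : WithTop ℝ)
    (h : ∀ t ∈ s, B ≤ v (f t)) : B ≤ v (∑ t ∈ s, f t) := by
  classical
  induction s using Finset.induction with
  | empty => simp [(hv0 0).mpr rfl]
  | @insert x s hx ih =>
    rw [Finset.sum_insert hx]
    refine le_trans (le_min (h x (Finset.mem_insert_self _ _))
      (ih fun t ht => h t (Finset.mem_insert_of_mem ht))) (hvadd _ _)

theorem valuation_ge_one_of_power_sum_bound
    {K : Type*} [Field K] [CharZero K] (v : K → WithTop ℝ)
    (hv0 : ∀ x : K, v x = ⊤ ↔ x = 0)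
    (hvmul : ∀ x y : K, v (x * y) = v x + v y)
    (hvadd : ∀ x y : K, min (v x) (v y) ≤ v (x + y))
    (q : K) (hq : v q = (1 : ℝ))
    (m : ℕ) (α : Fin m → K) (hαne : ∀ i, α i ≠ 0)
    (hαdist : Function.Injective α)
    (n : Fin m → ℤ) (hn : ∀ i, n i ≠ 0)
    (a : ℕ → K) (ha : ∀ k : ℕ, a k = ∑ i, (n i : K) * α i ^ k)
    (c : ℝ) (hc : 0 ≤ c)
    (hbound : ∀ k : ℕ, c ≤ (k : ℝ) → ((k : ℝ) - c : ℝ) ≤ v (a k)) :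
    (∀ i, (1 : ℝ) ≤ v (α i)) ∧ ∀ k : ℕ, 1 ≤ k → ((k : ℝ) : WithTop ℝ) ≤ v (a k) := by
  classical
  -- extract real values
  set e : K → ℝ := fun x => WithTop.untopD 0 (v x) with he_def
  have he : ∀ x : K, x ≠ 0 → v x = ((e x : ℝ) : WithTop ℝ) := by
    intro x hx
    have hne : v x ≠ ⊤ := fun ht => hx ((hv0 x).mp ht)
    rcases WithTop.ne_top_iff_exists.mp hne with ⟨r, hr⟩
    rw [← hr]
    simp [he_def, ← hr]
  -- v 1 = 0
  have v1 : v 1 = 0 := by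
    have h := hvmul 1 1
    rw [mul_one] at h
    have hne : v (1:K) ≠ ⊤ := fun ht => one_ne_zero ((hv0 1).mp ht)
    rcases WithTop.ne_top_iff_exists.mp hne with ⟨r, hr⟩
    rw [← hr, ← WithTop.coe_add] at h
    have : r = r + r := WithTop.coe_injective h
    have hr0 : r = 0 := by linarith
    rw [← hr, hr0]; rfl
  have vneg1 : v (-1 : K) = 0 := by
    have h := hvmul (-1 : K) (-1)
    rw [neg_mul_neg, one_mul, v1] at h
    have hne : v (-1:K) ≠ ⊤ := fun ht => (by norm_num : (-1:K) ≠ 0) ((hv0 _).mp ht)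
    rcases WithTop.ne_top_iff_exists.mp hne with ⟨r, hr⟩
    rw [← hr, ← WithTop.coe_add] at h
    have h' : (0:ℝ) = r + r := by exact_mod_cast h
    have hr0 : r = 0 := by linarith
    rw [← hr, hr0]; rfl
  have vneg : ∀ x : K, v (-x) = v x := by
    intro x
    have : (-x : K) = (-1) * x := by ring
    rw [this, hvmul, vneg1, zero_add]
  -- v of powers
  have hpow : ∀ x : K, x ≠ 0 → ∀ k : ℕ, v (x ^ k) = (((k : ℝ) * e x : ℝ) : WithTop ℝ) := by
    intro x hx k
    induction k with
    | zero => simp [pow_zero, v1]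
    | succ k ih =>
      rw [pow_succ, hvmul, ih, he x hx, ← WithTop.coe_add]
      refine congrArg _ ?_
      push_cast
      ring
  -- nonneg on integers
  have hnat : ∀ nn : ℕ, (0 : WithTop ℝ) ≤ v ((nn : K) + 1) := by
    intro nn
    induction nn with
    | zero => simp [v1]
    | succ k ih =>
      have : ((k+1 : ℕ) : K) + 1 = ((k : K) + 1) + 1 := by push_cast; ring
      rw [this]
      refine le_trans (le_min ih (by rw [v1])) (hvadd _ _)
  have hint : ∀ z : ℤ, z ≠ 0 → (0 : WithTop ℝ) ≤ v ((z : K)) := by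
    intro z hz
    have hna : z.natAbs ≠ 0 := Int.natAbs_ne_zero.mpr hz
    obtain ⟨t, ht⟩ := Nat.exists_eq_succ_of_ne_zero hna
    have hcast : ((z.natAbs : K)) = (t : K) + 1 := by rw [ht]; push_cast; ring
    rcases Int.natAbs_eq z with h | h
    · rw [h, Int.cast_natCast, hcast]; exact hnat t
    · rw [h, Int.cast_neg, Int.cast_natCast, vneg, hcast]; exact hnat t
  -- Part 1 core
  have part1 : ∀ i, 1 ≤ e (α i) := by
    intro i
    set P : Polynomial K := ∏ j ∈ Finset.univ.erase i, (Polynomial.X - Polynomial.C (α j)) with hP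
    have hPi : P.eval (α i) ≠ 0 := by
      rw [hP, Polynomial.eval_prod]
      refine Finset.prod_ne_zero_iff.mpr ?_
      intro j hj
      simp only [Polynomial.eval_sub, Polynomial.eval_X, Polynomial.eval_C]
      exact sub_ne_zero.mpr fun h => (Finset.mem_erase.mp hj).1 (hαdist h).symm
    have hPj : ∀ j, j ≠ i → P.eval (α j) = 0 := by
      intro j hj
      rw [hP, Polynomial.eval_prod]
      refine Finset.prod_eq_zero (Finset.mem_erase.mpr ⟨hj, Finset.mem_univ j⟩) ?_
      simp
    set β : K := (n i : K) * P.eval (α i) with hβdef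
    have hβ : β ≠ 0 := mul_ne_zero (Int.cast_ne_zero.mpr (hn i)) hPi
    set D := P.natDegree + 1 with hD
    have hid : ∀ k : ℕ, β * α i ^ k = ∑ r ∈ Finset.range D, P.coeff r * a (k + r) := by
      intro k
      have h1 : ∀ j : Fin m, ∑ r ∈ Finset.range D, P.coeff r * ((n j:K) * α j ^ (k+r))
          = (n j : K) * α j ^ k * P.eval (α j) := by
        intro j
        rw [Polynomial.eval_eq_sum_range, Finset.mul_sum]
        apply Finset.sum_congr rfl
        intro r _
        rw [pow_add]; ring
      have h2 : ∑ r ∈ Finset.range D, P.coeff r * a (k + r)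
          = ∑ j, (n j : K) * α j ^ k * P.eval (α j) := by
        simp only [ha, Finset.mul_sum]
        rw [Finset.sum_comm]
        exact Finset.sum_congr rfl fun j _ => h1 j
      rw [h2, Finset.sum_eq_single i (fun j _ hj => by rw [hPj j hj, mul_zero])
        (fun h => absurd (Finset.mem_univ i) h)]
      ring
    set Cb : ℝ := c + ∑ s ∈ Finset.range D, |e (P.coeff s)| with hCb
    have hterm : ∀ k : ℕ, c ≤ (k:ℝ) → ∀ r ∈ Finset.range D,
        (((k:ℝ) - Cb : ℝ) : WithTop ℝ) ≤ v (P.coeff r * a (k+r)) := by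
      intro k hk r hr
      by_cases h0 : P.coeff r = 0
      · rw [h0, zero_mul, (hv0 0).mpr rfl]; exact le_top
      · have hb := hbound (k+r) (by push_cast; linarith [Nat.cast_nonneg (α := ℝ) r])
        rw [hvmul, he _ h0]
        have habs : |e (P.coeff r)| ≤ ∑ s ∈ Finset.range D, |e (P.coeff s)| :=
          Finset.single_le_sum (f := fun s => |e (P.coeff s)|) (fun s _ => abs_nonneg _) hr
        have hstep1 : ((k:ℝ) - Cb : ℝ) ≤ (e (P.coeff r) + (((k+r:ℕ):ℝ) - c) : ℝ) := by
          push_cast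
          have h3 := neg_abs_le (e (P.coeff r))
          have h4 : (0:ℝ) ≤ r := Nat.cast_nonneg r
          rw [hCb]
          linarith
        calc (((k:ℝ) - Cb : ℝ) : WithTop ℝ)
            ≤ ((e (P.coeff r) + (((k+r:ℕ):ℝ) - c) : ℝ) : WithTop ℝ) := WithTop.coe_le_coe.mpr hstep1
          _ = ((e (P.coeff r) : ℝ) : WithTop ℝ) + (((((k+r:ℕ):ℝ) - c) : ℝ) : WithTop ℝ) := by
              rw [← WithTop.coe_add]
          _ ≤ ((e (P.coeff r) : ℝ) : WithTop ℝ) + v (a (k+r)) := add_le_add_right hb _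
    have hkey : ∀ k : ℕ, c ≤ (k:ℝ) → (k:ℝ) - Cb ≤ e β + (k:ℝ) * e (α i) := by
      intro k hk
      have h := val_sum_ge v hv0 hvadd _ _ _ (hterm k hk)
      rw [← hid k, hvmul, he β hβ, hpow (α i) (hαne i), ← WithTop.coe_add] at h
      exact_mod_cast h
    by_contra hlt
    push_neg at hlt
    obtain ⟨k, hk⟩ := exists_nat_gt (max c ((e β + Cb) / (1 - e (α i))))
    have hk1 : c ≤ (k:ℝ) := le_of_lt (lt_of_le_of_lt (le_max_left _ _) hk)
    have h := hkey k hk1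
    have h2 : (e β + Cb) / (1 - e (α i)) < (k:ℝ) := lt_of_le_of_lt (le_max_right _ _) hk
    rw [div_lt_iff₀ (by linarith)] at h2
    nlinarith
  constructor
  · intro i
    rw [he _ (hαne i)]
    exact_mod_cast part1 i
  · intro k _
    rw [ha k]
    apply val_sum_ge v hv0 hvadd
    intro j _
    rw [hvmul, hpow (α j) (hαne j)]
    have h1 : (0 : WithTop ℝ) ≤ v ((n j : ℤ) : K) := hint (n j) (hn j)
    have h2 : ((k:ℝ) : WithTop ℝ) ≤ (((k:ℝ) * e (α j) : ℝ) : WithTop ℝ) := by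
      apply WithTop.coe_le_coe.mpr
      nlinarith [part1 j, Nat.cast_nonneg (α := ℝ) k]
    calc ((k:ℝ) : WithTop ℝ) = 0 + ((k:ℝ) : WithTop ℝ) := (zero_add _).symm
      _ ≤ v ((n j : ℤ) : K) + (((k:ℝ) * e (α j) : ℝ) : WithTop ℝ) := add_le_add h1 h2
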